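/- Let d ≥ 3. For t > 0, x, y, z ∈ ℝ^d and 0 < s < t, define the density ratio Q(t,s,x,y,z) = ((t−s)/t)^{d/2} exp(|y−z|²/(2(t−s)) − |y−x|²/(2t)). Suppose y_n ∈ ℝ^d with |y_n| → ∞, t_n → ∞, |y_n|²/t_n bounded above and below away from 0, x_n → x, and u_n → ∞ with u_n/t_n → 0. Then Q(t_n, s, x_n, y_n, z) → 1 as n → ∞, uniformly over s ∈ (0, u_n] and z in any fixed bounded subset of ℝ^d. -/

import Mathlib

open MeasureTheory Real Filter Topology ProbabilityTheory

noncomputable section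

/-- Euclidean space `ℝ^d`. -/
abbrev Euc (d : ℕ) := EuclideanSpace ℝ (Fin d)

/-- The Brownian transition density `q(s; w) = (2πs)^{-d/2} exp(-|w|²/(2s))`. -/
def heatKernel (d : ℕ) (s : ℝ) (w : Euc d) : ℝ :=
  (2 * π * s) ^ (-(d : ℝ) / 2) * Real.exp (-‖w‖ ^ 2 / (2 * s))

/-- Joint density of a Brownian motion started at `x`, at times `s 0 < s 1 < ⋯`. -/
def jointDensity (d : ℕ) {k : ℕ} (x : Euc d) (s : Fin k → ℝ) (z : Fin k → Euc d) : ℝ :=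
  ∏ j : Fin k,
    heatKernel d (s j - if (j : ℕ) = 0 then 0 else s ⟨(j : ℕ) - 1, lt_of_le_of_lt (Nat.sub_le _ _) j.isLt⟩)
      (z j - if (j : ℕ) = 0 then x else z ⟨(j : ℕ) - 1, lt_of_le_of_lt (Nat.sub_le _ _) j.isLt⟩)

/-- Joint density of the Brownian bridge from `a` to `b` in time `t`, at interior times `s`. -/
def bridgeDensity (d : ℕ) {k : ℕ} (t : ℝ) (a b : Euc d) (s : Fin k → ℝ) (z : Fin k → Euc d) : ℝ :=
  jointDensity d a (Fin.snoc s t) (Fin.snoc z b) / heatKernel d t (b - a)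

/-- The open ordered simplex `0 < s₁ < ⋯ < s_k < t`. -/
def simplex (k : ℕ) (t : ℝ) : Set (Fin k → ℝ) :=
  {s | StrictMono s ∧ ∀ i, 0 < s i ∧ s i < t}

/-- `W` is a standard `d`-dimensional Brownian motion started at `x`, characterized by
continuous paths and finite-dimensional densities given by products of heat kernels. -/
def IsBrownianMotion {Ω : Type*} [MeasureSpace Ω] {d : ℕ} (x : Euc d)
    (W : ℝ → Ω → Euc d) : Prop :=
  (∀ ω, W 0 ω = x) ∧ (∀ ω, Continuous fun s => W s ω) ∧
  ∀ (k : ℕ) (s : Fin (k + 1) → ℝ), StrictMono s → (∀ i, 0 < s i) →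
    Measure.map (fun ω (i : Fin (k + 1)) => W (s i) ω) (ℙ : Measure Ω) =
      (volume : Measure (Fin (k + 1) → Euc d)).withDensity
        (fun z => ENNReal.ofReal (jointDensity d x s z))

/-- `X` is a `d`-dimensional Brownian bridge from `a` to `b` in time `t`. -/
def IsBrownianBridge {Ω : Type*} [MeasureSpace Ω] {d : ℕ} (t : ℝ) (a b : Euc d)
    (X : ℝ → Ω → Euc d) : Prop :=
  (∀ ω, X 0 ω = a) ∧ (∀ ω, X t ω = b) ∧
  (∀ ω, ContinuousOn (fun s => X s ω) (Set.Icc 0 t)) ∧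
  ∀ (k : ℕ) (s : Fin (k + 1) → ℝ), StrictMono s → (∀ i, 0 < s i ∧ s i < t) →
    Measure.map (fun ω (i : Fin (k + 1)) => X (s i) ω) (ℙ : Measure Ω) =
      (volume : Measure (Fin (k + 1) → Euc d)).withDensity
        (fun z => ENNReal.ofReal (bridgeDensity d t a b s z))

/-- The path integral `∫₀^t v(X_s) ds`. -/
def pathInt {Ω : Type*} {d : ℕ} (v : Euc d → ℝ) (X : ℝ → Ω → Euc d) (t : ℝ) (ω : Ω) : ℝ :=
  ∫ s in Set.Ioc (0 : ℝ) t, v (X s ω)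

/-- The total path integral `∫₀^∞ v(X_s) ds`. -/
def pathIntInf {Ω : Type*} {d : ℕ} (v : Euc d → ℝ) (X : ℝ → Ω → Euc d) (ω : Ω) : ℝ :=
  ∫ s in Set.Ioi (0 : ℝ), v (X s ω)

/-- The density ratio `Q_{j} = q(t; y - x)/q(Δ_j s; Δ_j z)` with the conventions
`s₀ = 0`, `s_{k+1} = t`, `z₀ = x`, `z_{k+1} = y`. -/
def Qratio (d : ℕ) {k : ℕ} (t : ℝ) (x y : Euc d) (s : Fin k → ℝ) (z : Fin k → Euc d)
    (j : Fin (k + 1)) : ℝ :=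
  heatKernel d t (y - x) /
    heatKernel d
      ((Fin.cons 0 (Fin.snoc s t) : Fin (k + 2) → ℝ) j.succ -
        (Fin.cons 0 (Fin.snoc s t) : Fin (k + 2) → ℝ) j.castSucc)
      ((Fin.cons x (Fin.snoc z y) : Fin (k + 2) → Euc d) j.succ -
        (Fin.cons x (Fin.snoc z y) : Fin (k + 2) → Euc d) j.castSucc)

set_option maxHeartbeats 2000000 in
/-- The kernel-ratio estimate in the proof of Theorem 2: `Q(t_n, s, x_n, y_n, z) → 1`
uniformly over `s ∈ (0, u_n]` and `z` in a fixed bounded set. -/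
theorem stmt17 (d : ℕ) (hd : 3 ≤ d)
    (x : Euc d) (xn yn : ℕ → Euc d) (tn un : ℕ → ℝ)
    (hxn : Tendsto xn atTop (𝓝 x))
    (hyn : Tendsto (fun n => ‖yn n‖) atTop atTop)
    (htn : Tendsto tn atTop atTop)
    (hratio : ∃ c C : ℝ, 0 < c ∧ ∀ n, c ≤ ‖yn n‖ ^ 2 / tn n ∧ ‖yn n‖ ^ 2 / tn n ≤ C)
    (hun : Tendsto un atTop atTop) (huntn : Tendsto (fun n => un n / tn n) atTop (𝓝 0))
    (B : Set (Euc d)) (hB : Bornology.IsBounded B) :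
    ∀ ε : ℝ, 0 < ε → ∀ᶠ n in atTop, ∀ s ∈ Set.Ioc (0 : ℝ) (un n), ∀ z ∈ B,
      |((tn n - s) / tn n) ^ ((d : ℝ) / 2) *
          Real.exp (‖yn n - z‖ ^ 2 / (2 * (tn n - s)) - ‖yn n - xn n‖ ^ 2 / (2 * tn n))
        - 1| < ε := by
  obtain ⟨R0, hR0⟩ := hB.exists_norm_le
  set R : ℝ := max R0 0 with hRdef
  have hRnn : (0:ℝ) ≤ R := le_max_right _ _
  have hzR : ∀ z ∈ B, ‖z‖ ≤ R := fun z hz => (hR0 z hz).trans (le_max_left _ _)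
  obtain ⟨c0, C, hc0, hcC⟩ := hratio
  have hC0 : 0 < C := lt_of_lt_of_le hc0 (le_trans (hcC 0).1 (hcC 0).2)
  set K : ℝ := R + ‖x‖ + 1 with hKdef
  have hK0 : (0:ℝ) < K := by positivity
  -- eventual facts
  have h1n : ∀ᶠ n in atTop, (1:ℝ) ≤ tn n := htn.eventually_ge_atTop 1
  have h2n : ∀ᶠ n in atTop, (1:ℝ) ≤ ‖yn n‖ := hyn.eventually_ge_atTop 1
  have h3n : ∀ᶠ n in atTop, ‖xn n‖ ≤ ‖x‖ + 1 :=
    hxn.norm.eventually (eventually_le_nhds (lt_add_one _))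
  have h4n : ∀ᶠ n in atTop, (0:ℝ) < un n := hun.eventually_gt_atTop 0
  have h5n : ∀ᶠ n in atTop, un n / tn n ≤ 1/2 :=
    huntn.eventually (eventually_le_nhds (by norm_num))
  -- ‖yn n‖ / tn n → 0
  have hg : Tendsto (fun n => ‖yn n‖ / tn n) atTop (𝓝 0) := by
    have hup : Tendsto (fun n => C / ‖yn n‖) atTop (𝓝 0) :=
      Tendsto.div_atTop tendsto_const_nhds hyn
    refine tendsto_of_tendsto_of_tendsto_of_le_of_le' tendsto_const_nhds hup ?_ ?_
    · filter_upwards [h1n] with n h1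
      have hT : (0:ℝ) < tn n := by linarith
      positivity
    · filter_upwards [h1n, h2n] with n h1 h2
      have hT : (0:ℝ) < tn n := by linarith
      have hY : (0:ℝ) < ‖yn n‖ := by linarith
      rw [div_le_div_iff₀ hT hY]
      have h := (div_le_iff₀ hT).1 (hcC n).2
      nlinarith
  -- b n → 0
  have hb : Tendsto (fun n => K * (2 * ‖yn n‖ + K) / (2 * tn n)) atTop (𝓝 0) := by
    have h : Tendsto (fun n => K * (‖yn n‖ / tn n) + (K^2/2) * (tn n)⁻¹) atTop (𝓝 0) := by
      have h2 : Tendsto (fun n => (tn n)⁻¹) atTop (𝓝 0) := htn.inv_tendsto_atTop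
      have := (hg.const_mul K).add (h2.const_mul (K^2/2))
      simpa using this
    refine Tendsto.congr' ?_ h
    filter_upwards [h1n] with n h1
    have hT : tn n ≠ 0 := by linarith
    field_simp
  -- c n → 0
  have hc : Tendsto (fun n => (‖yn n‖ + R)^2 * un n / (2 * tn n * (tn n - un n)))
      atTop (𝓝 0) := by
    have hupseq : Tendsto (fun n => (2*C + 2*R^2) * (un n / tn n)) atTop (𝓝 0) := by
      simpa using huntn.const_mul (2*C + 2*R^2)
    refine tendsto_of_tendsto_of_tendsto_of_le_of_le' tendsto_const_nhds hupseq ?_ ?_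
    · filter_upwards [h1n, h4n, h5n] with n h1 h4 h5
      have hT : (0:ℝ) < tn n := by linarith
      have hun2 : un n ≤ tn n / 2 := by
        have := (div_le_iff₀ hT).1 h5; linarith
      have h6 : (0:ℝ) < tn n - un n := by linarith
      exact div_nonneg (mul_nonneg (sq_nonneg _) h4.le)
        (by nlinarith)
    · filter_upwards [h1n, h2n, h4n, h5n] with n h1 h2 h4 h5
      have hT : (0:ℝ) < tn n := by linarith
      have hun2 : un n ≤ tn n / 2 := by
        have := (div_le_iff₀ hT).1 h5; linarith
      have h6 : (0:ℝ) < tn n - un n := by linarith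
      have hY2 : ‖yn n‖^2 ≤ C * tn n := (div_le_iff₀ hT).1 (hcC n).2
      have hden : (0:ℝ) < 2 * tn n * (tn n - un n) := by nlinarith
      have hre : (2*C + 2*R^2) * (un n / tn n) = ((2*C + 2*R^2) * un n) / tn n := by ring
      rw [hre, div_le_div_iff₀ hden hT]
      have k1 : (‖yn n‖ + R)^2 ≤ 2*‖yn n‖^2 + 2*R^2 := by nlinarith [sq_nonneg (‖yn n‖ - R)]
      have k2 : 2*‖yn n‖^2 + 2*R^2 ≤ (2*C + 2*R^2) * tn n := by
        nlinarith [mul_nonneg (sq_nonneg R) (sub_nonneg.2 h1)]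
      have k3 : (2*C + 2*R^2) * tn n ≤ (2*C + 2*R^2) * (2 * (tn n - un n)) := by
        nlinarith [sq_nonneg R]
      have key : (‖yn n‖ + R)^2 ≤ (2*C + 2*R^2) * (2 * (tn n - un n)) :=
        k1.trans (k2.trans k3)
      nlinarith [mul_le_mul_of_nonneg_right key (mul_nonneg h4.le hT.le)]
  -- lower comparison sequence → 1
  have hq : Tendsto (fun n => (tn n - un n) / tn n) atTop (𝓝 1) := by
    have h : Tendsto (fun n => 1 - un n / tn n) atTop (𝓝 1) := by
      have h0 : Tendsto (fun _ : ℕ => (1:ℝ)) atTop (𝓝 1) := tendsto_const_nhds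
      simpa using h0.sub huntn
    refine Tendsto.congr' ?_ h
    filter_upwards [h1n] with n h1
    have hT : tn n ≠ 0 := by linarith
    field_simp
  have hLten : Tendsto (fun n => ((tn n - un n) / tn n) ^ ((d:ℝ)/2) *
      Real.exp (-(K * (2 * ‖yn n‖ + K) / (2 * tn n)))) atTop (𝓝 1) := by
    have h1' : Tendsto (fun n => ((tn n - un n) / tn n) ^ ((d:ℝ)/2)) atTop (𝓝 1) := by
      have := hq.rpow_const (p := (d:ℝ)/2) (Or.inl one_ne_zero)
      simpa using this
    have h2' : Tendsto (fun n => Real.exp (-(K * (2 * ‖yn n‖ + K) / (2 * tn n))))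
        atTop (𝓝 1) := by
      have hbn : Tendsto (fun n => -(K * (2 * ‖yn n‖ + K) / (2 * tn n))) atTop (𝓝 0) := by
        simpa using hb.neg
      have := (Real.continuous_exp.tendsto 0).comp hbn
      simpa [Function.comp_def] using this
    simpa using h1'.mul h2'
  have hUten : Tendsto (fun n => Real.exp (K * (2 * ‖yn n‖ + K) / (2 * tn n) +
      (‖yn n‖ + R)^2 * un n / (2 * tn n * (tn n - un n)))) atTop (𝓝 1) := by
    have hbc : Tendsto (fun n => K * (2 * ‖yn n‖ + K) / (2 * tn n) +
        (‖yn n‖ + R)^2 * un n / (2 * tn n * (tn n - un n))) atTop (𝓝 0) := by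
      simpa using hb.add hc
    have := (Real.continuous_exp.tendsto 0).comp hbc
    simpa [Function.comp_def] using this
  intro ε hε
  have hLlow : ∀ᶠ n in atTop, 1 - ε < ((tn n - un n) / tn n) ^ ((d:ℝ)/2) *
      Real.exp (-(K * (2 * ‖yn n‖ + K) / (2 * tn n))) :=
    hLten.eventually (eventually_gt_nhds (by linarith))
  have hUhigh : ∀ᶠ n in atTop, Real.exp (K * (2 * ‖yn n‖ + K) / (2 * tn n) +
      (‖yn n‖ + R)^2 * un n / (2 * tn n * (tn n - un n))) < 1 + ε :=
    hUten.eventually (eventually_lt_nhds (by linarith))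
  filter_upwards [h1n, h2n, h3n, h4n, h5n, hLlow, hUhigh] with n h1 h2 h3 h4 h5 hLn hUn
  intro s hs z hzB
  obtain ⟨hs0, hsu⟩ := hs
  set T := tn n with hTdef
  set Y := yn n with hYdef
  set X := xn n with hXdef
  have hT : (0:ℝ) < T := by linarith
  have hun2 : un n ≤ T / 2 := by
    have := (div_le_iff₀ hT).1 h5; linarith
  have hsT : s < T := by linarith
  have hTs : (0:ℝ) < T - s := by linarith
  have hTu : (0:ℝ) < T - un n := by linarith
  have hzb : ‖z‖ ≤ R := hzR z hzB
  have ha1n : (0:ℝ) ≤ ‖Y - z‖ := norm_nonneg _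
  have ha2n : (0:ℝ) ≤ ‖Y - X‖ := norm_nonneg _
  have ha1 : ‖Y - z‖ ≤ ‖Y‖ + R := (norm_sub_le _ _).trans (by linarith)
  have ha2 : ‖Y - X‖ ≤ ‖Y‖ + (‖x‖ + 1) := (norm_sub_le _ _).trans (by linarith)
  have hdiff : |‖Y - z‖ - ‖Y - X‖| ≤ ‖z‖ + ‖X‖ := by
    have h := abs_norm_sub_norm_le (Y - z) (Y - X)
    have he : (Y - z) - (Y - X) = X - z := by abel
    rw [he] at h
    exact h.trans ((norm_sub_le _ _).trans (by linarith))
  obtain ⟨hd_lo, hd_hi⟩ := abs_le.1 hdiff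
  have hsum0 : (0:ℝ) ≤ ‖Y - z‖ + ‖Y - X‖ := by linarith
  have hsum : ‖Y - z‖ + ‖Y - X‖ ≤ 2 * ‖Y‖ + K := by
    have := norm_nonneg x; linarith
  have hSK : ‖z‖ + ‖X‖ ≤ K := by linarith
  have hprod : (‖z‖ + ‖X‖) * (‖Y - z‖ + ‖Y - X‖) ≤ K * (2 * ‖Y‖ + K) :=
    mul_le_mul hSK hsum hsum0 hK0.le
  have hup : ‖Y - z‖^2 - ‖Y - X‖^2 ≤ K * (2 * ‖Y‖ + K) := by
    nlinarith [mul_le_mul_of_nonneg_right hd_hi hsum0, hprod]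
  have hlo : -(K * (2 * ‖Y‖ + K)) ≤ ‖Y - z‖^2 - ‖Y - X‖^2 := by
    nlinarith [mul_le_mul_of_nonneg_right hd_lo hsum0, hprod]
  have h2T : (0:ℝ) < 2 * T := by linarith
  have hmono : ‖Y - z‖^2 / (2 * T) ≤ ‖Y - z‖^2 / (2 * (T - s)) := by
    apply div_le_div_of_nonneg_left (sq_nonneg _) (by linarith) (by linarith)
  have hsd : (‖Y - z‖^2 - ‖Y - X‖^2) / (2 * T)
      = ‖Y - z‖^2 / (2 * T) - ‖Y - X‖^2 / (2 * T) := sub_div _ _ _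
  have h1' : (‖Y - z‖^2 - ‖Y - X‖^2) / (2 * T) ≤ K * (2 * ‖Y‖ + K) / (2 * T) := by
    rw [div_le_div_iff₀ h2T h2T]
    nlinarith [mul_le_mul_of_nonneg_right hup h2T.le]
  have h2' : (-(K * (2 * ‖Y‖ + K))) / (2 * T) ≤ (‖Y - z‖^2 - ‖Y - X‖^2) / (2 * T) := by
    rw [div_le_div_iff₀ h2T h2T]
    nlinarith [mul_le_mul_of_nonneg_right hlo h2T.le]
  have hnegdiv : (-(K * (2 * ‖Y‖ + K))) / (2 * T) = -(K * (2 * ‖Y‖ + K) / (2 * T)) :=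
    neg_div _ _
  have hE2 : ‖Y - z‖^2 / (2 * (T - s)) - ‖Y - z‖^2 / (2 * T)
      = ‖Y - z‖^2 * s / (2 * T * (T - s)) := by
    field_simp
    ring
  have hE3 : ‖Y - z‖^2 * s / (2 * T * (T - s)) ≤
      (‖Y‖ + R)^2 * un n / (2 * T * (T - un n)) := by
    apply div_le_div₀ (mul_nonneg (sq_nonneg _) h4.le)
      (mul_le_mul (pow_le_pow_left₀ ha1n ha1 2) hsu hs0.le (by positivity))
      (mul_pos h2T hTu)
      (mul_le_mul_of_nonneg_left (by linarith) h2T.le)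
  have hElo : -(K * (2 * ‖Y‖ + K) / (2 * T)) ≤
      ‖Y - z‖^2 / (2 * (T - s)) - ‖Y - X‖^2 / (2 * T) := by
    linarith [h2', hsd, hmono, hnegdiv]
  have hEhi : ‖Y - z‖^2 / (2 * (T - s)) - ‖Y - X‖^2 / (2 * T) ≤
      K * (2 * ‖Y‖ + K) / (2 * T) + (‖Y‖ + R)^2 * un n / (2 * T * (T - un n)) := by
    linarith [h1', hsd, hE2, hE3]
  have hPle : ((T - s) / T) ^ ((d:ℝ)/2) ≤ 1 :=
    Real.rpow_le_one (div_nonneg hTs.le hT.le)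
      (by rw [div_le_one hT]; linarith) (by positivity)
  have hPge : ((T - un n) / T) ^ ((d:ℝ)/2) ≤ ((T - s) / T) ^ ((d:ℝ)/2) :=
    Real.rpow_le_rpow (div_nonneg hTu.le hT.le)
      ((div_le_div_iff_of_pos_right hT).2 (by linarith)) (by positivity)
  have hlow : ((T - un n) / T) ^ ((d:ℝ)/2) * Real.exp (-(K * (2 * ‖Y‖ + K) / (2 * T))) ≤
      ((T - s) / T) ^ ((d:ℝ)/2) *
        Real.exp (‖Y - z‖^2 / (2 * (T - s)) - ‖Y - X‖^2 / (2 * T)) :=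
    mul_le_mul hPge (Real.exp_le_exp.2 hElo) (Real.exp_pos _).le
      (Real.rpow_nonneg (div_nonneg hTs.le hT.le) _)
  have hhigh : ((T - s) / T) ^ ((d:ℝ)/2) *
      Real.exp (‖Y - z‖^2 / (2 * (T - s)) - ‖Y - X‖^2 / (2 * T)) ≤
      Real.exp (K * (2 * ‖Y‖ + K) / (2 * T) +
        (‖Y‖ + R)^2 * un n / (2 * T * (T - un n))) := by
    calc ((T - s) / T) ^ ((d:ℝ)/2) *
        Real.exp (‖Y - z‖^2 / (2 * (T - s)) - ‖Y - X‖^2 / (2 * T))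
        ≤ 1 * Real.exp (K * (2 * ‖Y‖ + K) / (2 * T) +
            (‖Y‖ + R)^2 * un n / (2 * T * (T - un n))) :=
          mul_le_mul hPle (Real.exp_le_exp.2 hEhi) (Real.exp_pos _).le zero_le_one
      _ = _ := one_mul _
  rw [abs_lt]
  constructor
  · linarith [hLn, hlow]
  · linarith [hUn, hhigh]

end
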